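/- Let λ, μ, α > 0 and let φ satisfy φ(T) → ∞, φ(T)/T → 0 as T → ∞, and φ(T)/T^a → ∞ for some a ∈ (0,1). Then for every x ≥ 0, limsup_{T→∞} (1/φ(T)) ln P(ξ_T(1) ≥ x) ≤ −x·ln((λ+μ)/λ). -/

import Mathlib

open MeasureTheory ProbabilityTheory Filter Set
open scoped ENNReal Topology

noncomputable section

/-- Transition probabilities of the embedded Markov chain of the Poisson process with
uniform catastrophes: from `i ≥ 1`, go to `i+1` with probability `λ/(λ+μ)` and to each
`j < i` with probability `μ/(i(λ+μ))`; from `0`, go to `1` with probability `1`. -/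
def transP (lam mu : ℝ) (i j : ℕ) : ℝ :=
  if i = 0 then (if j = 1 then 1 else 0)
  else if j = i + 1 then lam / (lam + mu)
  else if j < i then mu / (i * (lam + mu))
  else 0

/-- `η` is (distributed as) the discrete-time Markov chain on `ℕ` started at `x` with
transition probabilities `transP lam mu`, under the probability measure `P`:
the finite-dimensional distributions are products of transition probabilities. -/
def IsMarkovChainFrom {Ω : Type*} [MeasurableSpace Ω] (P : Measure Ω)
    (lam mu : ℝ) (x : ℕ) (η : ℕ → Ω → ℕ) : Prop :=
  (∀ k, Measurable (η k)) ∧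
  ∀ (n : ℕ) (path : ℕ → ℕ),
    P {ω | ∀ l ≤ n, η l ω = path l} =
      (if path 0 = x then 1 else 0) *
        ∏ l ∈ Finset.range n, ENNReal.ofReal (transP lam mu (path l) (path (l + 1)))

/-- `ν` is a Poisson process of rate `α` under `P`: it starts at `0`, has monotone paths
on `[0,∞)`, independent increments, and each increment over `[s,t]` is Poisson
distributed with mean `α(t-s)`. -/
def IsPoissonProcess {Ω : Type*} [MeasurableSpace Ω] (P : Measure Ω)
    (α : ℝ) (ν : ℝ → Ω → ℕ) : Prop :=
  (∀ t, Measurable (ν t)) ∧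
  (∀ ω, ν 0 ω = 0) ∧
  (∀ ω, MonotoneOn (fun t => ν t ω) (Set.Ici (0 : ℝ))) ∧
  (∀ (n : ℕ) (t : ℕ → ℝ), 0 ≤ t 0 → Monotone t →
    iIndepFun
      (fun i : Fin n => fun ω => ν (t (i + 1)) ω - ν (t i) ω) P) ∧
  (∀ s t : ℝ, 0 ≤ s → s ≤ t → ∀ k : ℕ,
    P {ω | ν t ω - ν s ω = k} =
      ENNReal.ofReal (Real.exp (-(α * (t - s))) * (α * (t - s)) ^ k / (Nat.factorial k)))

/-- The processes `η` and `ν` are independent (as processes). -/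
def IndepProc {Ω : Type*} [MeasurableSpace Ω] (P : Measure Ω)
    (η : ℕ → Ω → ℕ) (ν : ℝ → Ω → ℕ) : Prop :=
  IndepFun (fun ω => fun k => η k ω) (fun ω => fun t => ν t ω) P

set_option linter.unusedSectionVars false
set_option linter.unusedVariables false
set_option maxHeartbeats 1000000

namespace MDPaux

def ext (n : ℕ) (p : Fin (n+1) → ℕ) : ℕ → ℕ := fun l => if h : l < n + 1 then p ⟨l, h⟩ else 0

lemma ext_eq (n : ℕ) (p : Fin (n+1) → ℕ) {l : ℕ} (h : l ≤ n) :
    ext n p l = p ⟨l, by omega⟩ := dif_pos (by omega)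

variable {Ω : Type*} [MeasurableSpace Ω] (P : Measure Ω) [IsProbabilityMeasure P]
  (η : ℕ → Ω → ℕ)

def cyl (n : ℕ) (p : Fin (n+1) → ℕ) : Set Ω := {ω | ∀ l ≤ n, η l ω = ext n p l}

lemma measurable_cyl (hm : ∀ k, Measurable (η k)) (n : ℕ) (p : Fin (n+1) → ℕ) :
    MeasurableSet (cyl η n p) := by
  have : cyl η n p = ⋂ (l : ℕ) (_ : l ≤ n), (η l) ⁻¹' {ext n p l} := by
    ext ω; simp [cyl]
  rw [this]
  exact MeasurableSet.iInter fun l => MeasurableSet.iInter fun _ =>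
    (hm l) (measurableSet_singleton _)

lemma measure_eq_tsum_cyl (hm : ∀ k, Measurable (η k)) (n : ℕ) (A : Set Ω)
    (hA : MeasurableSet A) :
    P A = ∑' p : Fin (n+1) → ℕ, P (A ∩ cyl η n p) := by
  have hcover : (⋃ p : Fin (n+1) → ℕ, A ∩ cyl η n p) = A := by
    apply Set.Subset.antisymm
    · exact Set.iUnion_subset fun p => Set.inter_subset_left
    · intro ω hω
      refine Set.mem_iUnion.2 ⟨fun i => η i ω, hω, ?_⟩
      intro l hl
      rw [ext_eq n _ hl]
  have hdisj : Pairwise (Function.onFun Disjoint (fun p : Fin (n+1) → ℕ => A ∩ cyl η n p)) := by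
    intro p q hpq
    rw [Function.onFun]
    apply Set.disjoint_left.2
    rintro ω ⟨-, hp⟩ ⟨-, hq⟩
    apply hpq
    funext i
    have h1 := hp i.1 (by omega)
    have h2 := hq i.1 (by omega)
    rw [ext_eq n p (by omega)] at h1
    rw [ext_eq n q (by omega)] at h2
    simpa using h1 ▸ h2
  conv_lhs => rw [← hcover]
  rw [measure_iUnion hdisj fun p => hA.inter (measurable_cyl η hm n p)]

variable {lam mu : ℝ}

/-- decomposition of a single-time event into cylinder measures -/
lemma measure_single_eq (hη : IsMarkovChainFrom P lam mu 0 η) (k i : ℕ) :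
    P {ω | η k ω = i} =
      ∑' p : Fin (k+1) → ℕ, if p ⟨k, by omega⟩ = i then P (cyl η k p) else 0 := by
  rw [measure_eq_tsum_cyl P η hη.1 k {ω | η k ω = i}
    (by exact (hη.1 k) (measurableSet_singleton i))]
  congr 1
  funext p
  by_cases h : p ⟨k, by omega⟩ = i
  · rw [if_pos h]
    congr 1
    apply Set.Subset.antisymm Set.inter_subset_right
    intro ω hω
    refine ⟨?_, hω⟩
    show η k ω = i
    rw [hω k le_rfl, ext_eq k p le_rfl, h]
  · rw [if_neg h]
    have hempty : {ω | η k ω = i} ∩ cyl η k p = ∅ := by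
      apply Set.eq_empty_iff_forall_notMem.2
      rintro ω ⟨h1, h2⟩
      apply h
      rw [← ext_eq k p le_rfl, ← h2 k le_rfl]
      exact h1
    rw [hempty, measure_empty]

/-- the Chapman-Kolmogorov one-step recursion -/
lemma step (hη : IsMarkovChainFrom P lam mu 0 η) (k j : ℕ) :
    P {ω | η (k+1) ω = j} =
      ∑' i : ℕ, P {ω | η k ω = i} * ENNReal.ofReal (transP lam mu i j) := by
  have hmeas : MeasurableSet {ω | η (k+1) ω = j} :=
    (hη.1 (k+1)) (measurableSet_singleton j)
  rw [measure_eq_tsum_cyl P η hη.1 k _ hmeas]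
  have key : ∀ p : Fin (k+1) → ℕ,
      P ({ω | η (k+1) ω = j} ∩ cyl η k p) =
        P (cyl η k p) * ENNReal.ofReal (transP lam mu (p ⟨k, by omega⟩) j) := by
    intro p
    set q : ℕ → ℕ := fun l => if l = k + 1 then j else ext k p l with hq
    have hset : {ω | η (k+1) ω = j} ∩ cyl η k p = {ω | ∀ l ≤ k + 1, η l ω = q l} := by
      ext ω
      constructor
      · rintro ⟨h1, h2⟩ l hl
        by_cases hlk : l = k + 1
        · simp only [hq, hlk, if_pos rfl]; exact hlk ▸ h1
        · simp only [hq, if_neg hlk]; exact h2 l (by omega)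
      · intro h
        refine ⟨?_, fun l hl => ?_⟩
        · have := h (k+1) le_rfl
          simpa [hq] using this
        · have := h l (by omega)
          simpa [hq, show l ≠ k + 1 by omega] using this
    have hcyl : cyl η k p = {ω | ∀ l ≤ k, η l ω = ext k p l} := rfl
    rw [hset, hη.2 (k+1) q, hcyl, hη.2 k (ext k p)]
    have hq0 : q 0 = ext k p 0 := by simp [hq]
    have hqk : ∀ l ≤ k, q l = ext k p l := by
      intro l hl; simp [hq, show l ≠ k + 1 by omega]
    rw [Finset.prod_range_succ]
    have hprod : ∀ l ∈ Finset.range k,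
        ENNReal.ofReal (transP lam mu (q l) (q (l+1))) =
        ENNReal.ofReal (transP lam mu (ext k p l) (ext k p (l+1))) := by
      intro l hl
      rw [Finset.mem_range] at hl
      rw [hqk l (by omega), hqk (l+1) (by omega)]
    rw [Finset.prod_congr rfl hprod, hq0, hqk k le_rfl]
    have : q (k+1) = j := by simp [hq]
    rw [this, ext_eq k p le_rfl]
    ring
  calc ∑' p : Fin (k+1) → ℕ, P ({ω | η (k+1) ω = j} ∩ cyl η k p)
      = ∑' p : Fin (k+1) → ℕ, P (cyl η k p) * ENNReal.ofReal (transP lam mu (p ⟨k, by omega⟩) j) := by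
        exact tsum_congr key
    _ = ∑' p : Fin (k+1) → ℕ, ∑' i : ℕ,
          (if p ⟨k, by omega⟩ = i then P (cyl η k p) * ENNReal.ofReal (transP lam mu i j)
            else 0) := by
        apply tsum_congr
        intro p
        rw [tsum_eq_single (p ⟨k, by omega⟩) (fun b hb => by rw [if_neg (Ne.symm hb)]),
          if_pos rfl]
    _ = ∑' i : ℕ, ∑' p : Fin (k+1) → ℕ,
          (if p ⟨k, by omega⟩ = i then P (cyl η k p) * ENNReal.ofReal (transP lam mu i j)
            else 0) :=
        ENNReal.tsum_comm
    _ = ∑' i : ℕ, P {ω | η k ω = i} * ENNReal.ofReal (transP lam mu i j) := by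
        apply tsum_congr
        intro i
        rw [measure_single_eq P η hη k i, ← ENNReal.tsum_mul_right]
        apply tsum_congr
        intro p
        rw [ite_mul, zero_mul]

lemma tsum_ite_geom (r : ℝ≥0∞) (j : ℕ) :
    ∑' i : ℕ, (if j < i then r ^ i else 0) = r ^ (j+1) * (1 - r)⁻¹ := by
  have hinj : Function.Injective (fun d : ℕ => j + 1 + d) := fun a b h => by simpa using h
  have hsupp : Function.support (fun i : ℕ => if j < i then r ^ i else 0) ⊆
      Set.range (fun d : ℕ => j + 1 + d) := by
    intro i hi
    simp only [Function.mem_support] at hi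
    by_cases h : j < i
    · exact ⟨i - (j+1), by simp; omega⟩
    · simp [h] at hi
  rw [← Function.Injective.tsum_eq hinj hsupp]
  have : ∀ d : ℕ, (if j < j + 1 + d then r ^ (j+1+d) else 0) = r ^ (j+1) * r ^ d := by
    intro d
    rw [if_pos (by omega), pow_add]
  rw [tsum_congr this, ENNReal.tsum_mul_left, ENNReal.tsum_geometric]

variable {lam mu : ℝ}

lemma transP_up (hlam : 0 < lam) (i : ℕ) (hi : 1 ≤ i) :
    transP lam mu i (i+1) = lam / (lam + mu) := by
  simp [transP, show i ≠ 0 by omega]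

lemma transP_down (i j : ℕ) (hij : j < i) :
    transP lam mu i j = mu / (i * (lam + mu)) := by
  simp [transP, show i ≠ 0 by omega, show j ≠ i + 1 by omega, hij]

lemma transP_zero (i j : ℕ) (hj : 2 ≤ j) (h1 : i ≠ j - 1) (h2 : ¬ j < i) :
    transP lam mu i j = 0 := by
  rcases Nat.eq_zero_or_pos i with rfl | hi
  · simp [transP, show j ≠ 1 by omega]
  · simp [transP, show i ≠ 0 by omega, show j ≠ i + 1 by omega, h2]

lemma base (hη : IsMarkovChainFrom P lam mu 0 η) (i : ℕ) :
    P {ω | η 0 ω = i} = if i = 0 then 1 else 0 := by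
  have h := hη.2 0 (fun _ => i)
  have hset : {ω | ∀ l ≤ 0, η l ω = (fun _ => i) l} = {ω | η 0 ω = i} := by
    ext ω
    simp only [Set.mem_setOf_eq]
    exact ⟨fun h => h 0 le_rfl, fun h l hl => by rw [Nat.le_zero.1 hl]; exact h⟩
  rw [hset] at h
  simpa using h

lemma marg_bound (hη : IsMarkovChainFrom P lam mu 0 η)
    (hlam : 0 < lam) (hmu : 0 < mu) (θ : ℝ)
    (hθp : lam / (lam + mu) < θ) (hθ1 : θ < 1) :
    ∃ C : ℝ, 1 ≤ C ∧ ∀ k j, P {ω | η k ω = j} ≤ ENNReal.ofReal (C * θ ^ j) := by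
  set p := lam / (lam + mu) with hpdef
  have hlm : 0 < lam + mu := by linarith
  have hp0 : 0 < p := div_pos hlam hlm
  have hθ0 : 0 < θ := hp0.trans hθp
  have hp1 : 1 - p = mu / (lam + mu) := by rw [hpdef]; field_simp; ring
  have hq0 : 0 < 1 - p := by rw [hp1]; positivity
  have h1θ : 0 < 1 - θ := by linarith
  have hθp' : 0 < θ - p := by linarith
  set M : ℝ := θ^2 * (1 - p) / ((1 - θ) * (θ - p)) with hMdef
  have hM0 : 0 < M := div_pos (mul_pos (pow_pos hθ0 2) hq0) (mul_pos h1θ hθp')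
  set m0 : ℕ := max 1 ⌈M⌉₊ with hm0def
  have hm01 : 1 ≤ m0 := le_max_left _ _
  set C : ℝ := (θ⁻¹) ^ m0 with hCdef
  have hθinv : 1 ≤ θ⁻¹ := by
    rw [le_inv_comm₀ one_pos hθ0]
    simpa using hθ1.le
  have hC1 : 1 ≤ C := one_le_pow₀ hθinv
  have hC0 : 0 < C := lt_of_lt_of_le one_pos hC1
  refine ⟨C, hC1, ?_⟩
  -- key real inequality
  have hkey : ∀ j : ℕ, m0 + 1 ≤ j → p + θ^2 * (1-θ)⁻¹ * ((1-p)/((j:ℝ)+1)) ≤ θ := by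
    intro j hj
    have hjM : M ≤ (j:ℝ) + 1 := by
      calc M ≤ (⌈M⌉₊ : ℝ) := Nat.le_ceil M
        _ ≤ (m0 : ℝ) := Nat.cast_le.2 (le_max_right 1 ⌈M⌉₊)
        _ ≤ (j:ℝ) + 1 := by
            have : (m0:ℝ) ≤ (j:ℝ) := Nat.cast_le.2 (Nat.le_of_succ_le hj)
            linarith
    have hX0 : (0:ℝ) < (j:ℝ) + 1 := by positivity
    have heq : θ^2 * (1-θ)⁻¹ * ((1-p)/((j:ℝ)+1)) = θ^2 * (1-p) / ((1-θ) * ((j:ℝ)+1)) := by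
      field_simp
    rw [heq]
    have hMe : M * ((1-θ) * (θ - p)) = θ^2 * (1-p) := by
      rw [hMdef]; field_simp
    have hbound : θ^2 * (1-p) / ((1-θ) * ((j:ℝ)+1)) ≤ θ - p := by
      rw [div_le_iff₀ (by positivity)]
      calc θ^2 * (1-p) = M * ((1-θ) * (θ - p)) := hMe.symm
        _ ≤ ((j:ℝ)+1) * ((1-θ) * (θ - p)) :=
            mul_le_mul_of_nonneg_right hjM (by positivity)
        _ = (θ - p) * ((1-θ) * ((j:ℝ)+1)) := by ring
    linarith
  -- the induction
  intro k
  induction k with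
  | zero =>
    intro j
    rw [base P η hη j]
    by_cases hj : j = 0
    · subst hj
      simp only [if_pos rfl, pow_zero, mul_one]
      rw [← ENNReal.ofReal_one]
      exact ENNReal.ofReal_le_ofReal hC1
    · rw [if_neg hj]
      exact zero_le
  | succ k ih =>
    intro j
    by_cases hj : j ≤ m0
    · -- trivial regime
      have h1 : C * θ ^ j = (θ⁻¹) ^ (m0 - j) := by
        have : (θ⁻¹) ^ m0 = (θ⁻¹) ^ (m0 - j) * (θ⁻¹) ^ j := by
          rw [← pow_add]; congr 1; omega
        rw [hCdef, this, mul_assoc, ← mul_pow, inv_mul_cancel₀ (ne_of_gt hθ0), one_pow, mul_one]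
      calc P {ω | η (k+1) ω = j} ≤ 1 := prob_le_one
        _ ≤ ENNReal.ofReal (C * θ ^ j) := by
            rw [← ENNReal.ofReal_one]
            exact ENNReal.ofReal_le_ofReal (by rw [h1]; exact one_le_pow₀ hθinv)
    · have hj1 : m0 + 1 ≤ j := by omega
      have hj2 : 2 ≤ j := by omega
      set r : ℝ≥0∞ := ENNReal.ofReal θ with hrdef
      set cst : ℝ≥0∞ := ENNReal.ofReal (C * ((1-p)/((j:ℝ)+1))) with hcstdef
      rw [step P η hη k j]
      have hpoint : ∀ i : ℕ,
          P {ω | η k ω = i} * ENNReal.ofReal (transP lam mu i j) ≤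
            (if i = j - 1 then ENNReal.ofReal (C * θ^(j-1) * p) else 0) +
              (if j < i then r ^ i else 0) * cst := by
        intro i
        by_cases h1 : i = j - 1
        · subst h1
          have ht : transP lam mu (j-1) j = p := by
            have := transP_up (mu := mu) hlam (j-1) (by omega)
            rwa [show j - 1 + 1 = j by omega] at this
          rw [ht, if_pos rfl, if_neg (by omega), zero_mul, add_zero]
          calc P {ω | η k ω = j-1} * ENNReal.ofReal p
              ≤ ENNReal.ofReal (C * θ^(j-1)) * ENNReal.ofReal p :=
                mul_le_mul_left (ih (j-1)) _
            _ = ENNReal.ofReal (C * θ^(j-1) * p) := by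
                rw [← ENNReal.ofReal_mul (by positivity)]
        · rw [if_neg h1, zero_add]
          by_cases h2 : j < i
          · rw [if_pos h2, transP_down i j h2]
            have hreal : mu / ((i:ℝ) * (lam + mu)) ≤ (1-p)/((j:ℝ)+1) := by
              rw [hp1, div_div]
              have hij : ((j:ℝ)+1) ≤ (i:ℝ) := by exact_mod_cast h2
              apply div_le_div_of_nonneg_left hmu.le (by positivity)
              nlinarith
            calc P {ω | η k ω = i} * ENNReal.ofReal (mu / ((i:ℝ) * (lam + mu)))
                ≤ ENNReal.ofReal (C * θ^i) * ENNReal.ofReal ((1-p)/((j:ℝ)+1)) :=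
                  mul_le_mul' (ih i) (ENNReal.ofReal_le_ofReal hreal)
              _ = r ^ i * cst := by
                  have e1 : ENNReal.ofReal (C * θ ^ i) =
                      ENNReal.ofReal θ ^ i * ENNReal.ofReal C := by
                    rw [← ENNReal.ofReal_pow hθ0.le,
                      ← ENNReal.ofReal_mul (pow_nonneg hθ0.le i)]
                    exact congrArg ENNReal.ofReal (mul_comm C _)
                  rw [e1, mul_assoc, ← ENNReal.ofReal_mul hC0.le]
          · rw [transP_zero i j hj2 h1 h2, ENNReal.ofReal_zero, mul_zero, if_neg h2, zero_mul]
      calc ∑' i : ℕ, P {ω | η k ω = i} * ENNReal.ofReal (transP lam mu i j)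
          ≤ ∑' i : ℕ, ((if i = j - 1 then ENNReal.ofReal (C * θ^(j-1) * p) else 0) +
              (if j < i then r ^ i else 0) * cst) :=
            ENNReal.tsum_le_tsum hpoint
        _ = ENNReal.ofReal (C * θ^(j-1) * p) + r ^ (j+1) * (1 - r)⁻¹ * cst := by
            rw [ENNReal.tsum_add, ENNReal.tsum_mul_right, tsum_ite_geom,
              tsum_eq_single (j-1) (fun b hb => if_neg hb), if_pos rfl]
        _ ≤ ENNReal.ofReal (C * θ ^ j) := by
            have h1r : (1 - r)⁻¹ = ENNReal.ofReal ((1-θ)⁻¹) := by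
              rw [hrdef, ← ENNReal.ofReal_one, ← ENNReal.ofReal_sub _ hθ0.le,
                ← ENNReal.ofReal_inv_of_pos h1θ]
            have hpow : r ^ (j+1) = ENNReal.ofReal (θ^(j+1)) := by
              rw [hrdef, ← ENNReal.ofReal_pow hθ0.le]
            rw [h1r, hpow, hcstdef, ← ENNReal.ofReal_mul (by positivity),
              ← ENNReal.ofReal_mul (by positivity),
              ← ENNReal.ofReal_add (by positivity) (by positivity)]
            apply ENNReal.ofReal_le_ofReal
            have hsplit : θ^(j+1) = θ^(j-1) * θ^2 := by
              rw [← pow_add]; congr 1; omega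
            have hsplit2 : θ^j = θ^(j-1) * θ := by
              rw [← pow_succ]; congr 1; omega
            calc C * θ^(j-1) * p + θ^(j+1) * (1-θ)⁻¹ * (C * ((1-p)/((j:ℝ)+1)))
                = (C * θ^(j-1)) * (p + θ^2 * (1-θ)⁻¹ * ((1-p)/((j:ℝ)+1))) := by
                  rw [hsplit]; ring
              _ ≤ (C * θ^(j-1)) * θ :=
                  mul_le_mul_of_nonneg_left (hkey j hj1) (by positivity)
              _ = C * θ^j := by rw [hsplit2]; ring

variable (ν : ℝ → Ω → ℕ)

lemma tail_bound (hmeas : ∀ k, Measurable (η k)) (θ C : ℝ) (hθ0 : 0 < θ) (hθ1 : θ < 1)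
    (hC0 : 0 < C) (hbound : ∀ k j, P {ω | η k ω = j} ≤ ENNReal.ofReal (C * θ ^ j))
    (k m : ℕ) :
    P {ω | m ≤ η k ω} ≤ ENNReal.ofReal (C * (1-θ)⁻¹ * θ ^ m) := by
  have hset : {ω | m ≤ η k ω} = ⋃ d : ℕ, {ω | η k ω = m + d} := by
    ext ω
    simp only [Set.mem_setOf_eq, Set.mem_iUnion]
    exact ⟨fun h => ⟨η k ω - m, by omega⟩, fun ⟨d, hd⟩ => by omega⟩
  rw [hset]
  calc P (⋃ d : ℕ, {ω | η k ω = m + d}) ≤ ∑' d : ℕ, P {ω | η k ω = m + d} :=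
        measure_iUnion_le _
    _ ≤ ∑' d : ℕ, ENNReal.ofReal (C * θ ^ m) * ENNReal.ofReal θ ^ d := by
        apply ENNReal.tsum_le_tsum
        intro d
        calc P {ω | η k ω = m + d} ≤ ENNReal.ofReal (C * θ ^ (m + d)) := hbound k (m+d)
          _ = ENNReal.ofReal (C * θ ^ m) * ENNReal.ofReal θ ^ d := by
              rw [← ENNReal.ofReal_pow hθ0.le, ← ENNReal.ofReal_mul (by positivity)]
              exact congrArg ENNReal.ofReal (by rw [pow_add]; ring)
    _ = ENNReal.ofReal (C * θ ^ m) * (1 - ENNReal.ofReal θ)⁻¹ := by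
        rw [ENNReal.tsum_mul_left, ENNReal.tsum_geometric]
    _ = ENNReal.ofReal (C * (1-θ)⁻¹ * θ ^ m) := by
        rw [show (1 : ℝ≥0∞) - ENNReal.ofReal θ = ENNReal.ofReal (1-θ) by
            rw [← ENNReal.ofReal_one, ← ENNReal.ofReal_sub _ hθ0.le],
          ← ENNReal.ofReal_inv_of_pos (by linarith), ← ENNReal.ofReal_mul (by positivity)]
        exact congrArg ENNReal.ofReal (by ring)

lemma nu_combined (hmeasη : ∀ k, Measurable (η k)) (hmeasν : ∀ t, Measurable (ν t))
    (hind : IndepFun (fun ω => fun k => η k ω) (fun ω => fun t => ν t ω) P)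
    (C' : ℝ) (hC' : 0 ≤ C') (θ : ℝ) (hθ0 : 0 ≤ θ)
    (htail : ∀ k m, P {ω | m ≤ η k ω} ≤ ENNReal.ofReal (C' * θ ^ m))
    (T : ℝ) (m : ℕ) :
    P {ω | m ≤ η (ν T ω) ω} ≤ ENNReal.ofReal (C' * θ ^ m) := by
  have hsub : {ω | m ≤ η (ν T ω) ω} =
      ⋃ k : ℕ, ((fun ω => ν T ω) ⁻¹' {k} ∩ (fun ω => η k ω) ⁻¹' (Set.Ici m)) := by
    ext ω
    simp only [Set.mem_setOf_eq, Set.mem_iUnion, Set.mem_inter_iff, Set.mem_preimage,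
      Set.mem_singleton_iff, Set.mem_Ici]
    exact ⟨fun h => ⟨ν T ω, rfl, h⟩, fun ⟨k, hk, h⟩ => by rw [hk]; exact h⟩
  rw [hsub]
  calc P (⋃ k : ℕ, ((fun ω => ν T ω) ⁻¹' {k} ∩ (fun ω => η k ω) ⁻¹' (Set.Ici m)))
      ≤ ∑' k : ℕ, P ((fun ω => ν T ω) ⁻¹' {k} ∩ (fun ω => η k ω) ⁻¹' (Set.Ici m)) :=
        measure_iUnion_le _
    _ = ∑' k : ℕ, P ((fun ω => ν T ω) ⁻¹' {k}) * P ((fun ω => η k ω) ⁻¹' (Set.Ici m)) := by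
        apply tsum_congr
        intro k
        have hIFk : IndepFun (fun ω => ν T ω) (fun ω => η k ω) P := by
          have := (hind.comp (measurable_pi_apply k) (measurable_pi_apply T)).symm
          exact this
        exact hIFk.measure_inter_preimage_eq_mul {k} (Set.Ici m) (measurableSet_singleton k)
          measurableSet_Ici
    _ ≤ ∑' k : ℕ, P ((fun ω => ν T ω) ⁻¹' {k}) * ENNReal.ofReal (C' * θ ^ m) := by
        apply ENNReal.tsum_le_tsum
        intro k
        exact mul_le_mul_right (htail k m) _
    _ = (∑' k : ℕ, P ((fun ω => ν T ω) ⁻¹' {k})) * ENNReal.ofReal (C' * θ ^ m) :=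
        ENNReal.tsum_mul_right
    _ ≤ 1 * ENNReal.ofReal (C' * θ ^ m) := by
        apply mul_le_mul_left
        have hdisj : Pairwise (Function.onFun Disjoint
            (fun k : ℕ => (fun ω => ν T ω) ⁻¹' {k})) := by
          intro a b hab
          rw [Function.onFun]
          apply Set.disjoint_left.2
          intro ω ha hb
          exact hab (ha.symm.trans hb)
        rw [← measure_iUnion hdisj (fun k => (hmeasν T) (measurableSet_singleton k))]
        exact prob_le_one
    _ = ENNReal.ofReal (C' * θ ^ m) := one_mul _

lemma process_bound {Ω : Type*} [MeasurableSpace Ω] (P : Measure Ω) [IsProbabilityMeasure P]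
    {lam mu : ℝ} (η : ℕ → Ω → ℕ) (ν : ℝ → Ω → ℕ)
    (hη : IsMarkovChainFrom P lam mu 0 η) (hmeasν : ∀ t, Measurable (ν t))
    (hind : IndepFun (fun ω => fun k => η k ω) (fun ω => fun t => ν t ω) P)
    (hlam : 0 < lam) (hmu : 0 < mu) (θ : ℝ)
    (hθp : lam / (lam + mu) < θ) (hθ1 : θ < 1) :
    ∃ C₂ : ℝ, 1 ≤ C₂ ∧
      ∀ (T : ℝ) (m : ℕ), P {ω | m ≤ η (ν T ω) ω} ≤ ENNReal.ofReal (C₂ * θ ^ m) := by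
  have hθ0 : 0 < θ := lt_trans (div_pos hlam (by linarith)) hθp
  obtain ⟨C, hC1, hb⟩ := marg_bound P η hη hlam hmu θ hθp hθ1
  have hC0 : 0 < C := lt_of_lt_of_le one_pos hC1
  have h1θ : 0 < 1 - θ := by linarith
  have hinv1 : 1 ≤ (1 - θ)⁻¹ := by
    rw [le_inv_comm₀ one_pos h1θ]
    linarith
  refine ⟨C * (1 - θ)⁻¹, ?_, ?_⟩
  · calc (1:ℝ) = 1 * 1 := (one_mul 1).symm
      _ ≤ C * (1 - θ)⁻¹ := mul_le_mul hC1 hinv1 zero_le_one hC0.le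
  · intro T m
    exact nu_combined P η ν hη.1 hmeasν hind (C * (1 - θ)⁻¹)
      (by positivity) θ hθ0.le
      (fun k m => tail_bound P η hη.1 θ C hθ0 hθ1 hC0 hb k m) T m

end MDPaux

/-- **Upper bound in the sublinear (moderate deviations) regime.** If `φ(T) → ∞`,
`φ(T)/T → 0`, and `φ(T)/T^a → ∞` for some `a ∈ (0,1)`, then for every `x ≥ 0`,
`limsup_{T→∞} (1/φ(T)) ln P(ξ(T)/φ(T) ≥ x) ≤ -x ln((λ+μ)/λ)`. -/
theorem mdp_upper_bound_poisson_uniform_catastrophes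
    {Ω : Type*} [MeasurableSpace Ω] (P : Measure Ω) [IsProbabilityMeasure P]
    (lam mu alpha : ℝ) (hlam : 0 < lam) (hmu : 0 < mu) (halpha : 0 < alpha)
    (η : ℕ → Ω → ℕ) (ν : ℝ → Ω → ℕ)
    (hη : IsMarkovChainFrom P lam mu 0 η)
    (hν : IsPoissonProcess P alpha ν)
    (hind : IndepProc P η ν)
    (φ : ℝ → ℝ) (hφpos : ∀ T > (0 : ℝ), 0 < φ T)
    (hφ : Tendsto φ atTop atTop)
    (hφ0 : Tendsto (fun T => φ T / T) atTop (𝓝 0))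
    (a : ℝ) (ha : a ∈ Set.Ioo (0 : ℝ) 1)
    (hφa : Tendsto (fun T => φ T / T ^ a) atTop atTop)
    (x : ℝ) (hx : 0 ≤ x) :
    Filter.limsup
        (fun T => (((φ T)⁻¹ : ℝ) : EReal) *
          ENNReal.log (P {ω | x ≤ (η (ν T ω) ω : ℝ) / φ T}))
        atTop
      ≤ ((-(x * Real.log ((lam + mu) / lam)) : ℝ) : EReal) := by
  set p : ℝ := lam / (lam + mu) with hpdef
  have hlm : 0 < lam + mu := by linarith
  have hp0 : 0 < p := div_pos hlam hlm
  have hp1 : p < 1 := by rw [hpdef, div_lt_one hlm]; linarith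
  have hRHS : -(x * Real.log ((lam + mu) / lam)) = x * Real.log p := by
    rw [hpdef, show lam / (lam + mu) = ((lam + mu) / lam)⁻¹ by rw [inv_div], Real.log_inv]
    ring
  rw [hRHS]
  -- main bound for each θ ∈ (p, 1)
  have key : ∀ θ : ℝ, p < θ → θ < 1 →
      Filter.limsup
        (fun T => (((φ T)⁻¹ : ℝ) : EReal) *
          ENNReal.log (P {ω | x ≤ (η (ν T ω) ω : ℝ) / φ T}))
        atTop ≤ ((x * Real.log θ : ℝ) : EReal) := by
    intro θ hθp hθ1
    have hθ0 : 0 < θ := hp0.trans hθp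
    obtain ⟨C₂, hC₂, hPb⟩ := MDPaux.process_bound P η ν hη hν.1 hind hlam hmu θ hθp hθ1
    have hC₂0 : 0 < C₂ := lt_of_lt_of_le one_pos hC₂
    set g : ℝ → ℝ := fun T => Real.log C₂ * (φ T)⁻¹ + x * Real.log θ with hgdef
    have hEv : ∀ᶠ T in atTop,
        (((φ T)⁻¹ : ℝ) : EReal) *
          ENNReal.log (P {ω | x ≤ (η (ν T ω) ω : ℝ) / φ T}) ≤ ((g T : ℝ) : EReal) := by
      filter_upwards [eventually_gt_atTop (0:ℝ)] with T hT
      have hφT : 0 < φ T := hφpos T hT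
      have hEvent : {ω | x ≤ (η (ν T ω) ω : ℝ) / φ T} =
          {ω | ⌈x * φ T⌉₊ ≤ η (ν T ω) ω} := by
        ext ω
        simp only [Set.mem_setOf_eq]
        rw [le_div_iff₀ hφT, ← Nat.ceil_le]
      rw [hEvent]
      set m : ℕ := ⌈x * φ T⌉₊ with hmdef
      set Q : ℝ≥0∞ := P {ω | m ≤ η (ν T ω) ω} with hQdef
      by_cases hQ0 : Q = 0
      · rw [hQ0, ENNReal.log_zero,
          EReal.mul_bot_of_pos (by exact_mod_cast inv_pos.2 hφT)]
        exact bot_le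
      · have hQtop : Q ≠ ⊤ := measure_ne_top P _
        rw [ENNReal.log_pos_real hQ0 hQtop, ← EReal.coe_mul, EReal.coe_le_coe_iff]
        have hQle : Q.toReal ≤ C₂ * θ ^ m :=
          ENNReal.toReal_le_of_le_ofReal (by positivity) (hPb T m)
        have hQpos : 0 < Q.toReal := ENNReal.toReal_pos hQ0 hQtop
        have hlog1 : Real.log Q.toReal ≤ Real.log C₂ + m * Real.log θ := by
          calc Real.log Q.toReal ≤ Real.log (C₂ * θ ^ m) := Real.log_le_log hQpos hQle
            _ = Real.log C₂ + Real.log (θ ^ m) :=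
                Real.log_mul (ne_of_gt hC₂0) (by positivity)
            _ = Real.log C₂ + m * Real.log θ := by rw [Real.log_pow]
        have hmθ : (m : ℝ) * Real.log θ ≤ x * φ T * Real.log θ := by
          have hlogθ : Real.log θ < 0 := Real.log_neg hθ0 hθ1
          have hceil : x * φ T ≤ (m : ℝ) := Nat.le_ceil (x * φ T)
          nlinarith
        calc (φ T)⁻¹ * Real.log Q.toReal
            ≤ (φ T)⁻¹ * (Real.log C₂ + m * Real.log θ) :=
              mul_le_mul_of_nonneg_left hlog1 (inv_nonneg.2 hφT.le)
          _ ≤ (φ T)⁻¹ * (Real.log C₂ + x * φ T * Real.log θ) :=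
              mul_le_mul_of_nonneg_left (by linarith) (inv_nonneg.2 hφT.le)
          _ = g T := by
              rw [hgdef]
              field_simp
    have hg : Tendsto (fun T => ((g T : ℝ) : EReal)) atTop
        (𝓝 ((x * Real.log θ : ℝ) : EReal)) := by
      apply EReal.tendsto_coe.2
      rw [hgdef]
      have h1 : Tendsto (fun T => (φ T)⁻¹) atTop (𝓝 0) := hφ.inv_tendsto_atTop
      have h2 : Tendsto (fun T => Real.log C₂ * (φ T)⁻¹) atTop (𝓝 0) := by
        simpa using h1.const_mul (Real.log C₂)
      simpa using h2.add (tendsto_const_nhds (x := x * Real.log θ))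
    calc Filter.limsup _ atTop ≤ Filter.limsup (fun T => ((g T : ℝ) : EReal)) atTop :=
          Filter.limsup_le_limsup hEv
      _ = ((x * Real.log θ : ℝ) : EReal) := hg.limsup_eq
  -- pass to the limit θ → p
  set θseq : ℕ → ℝ := fun n => p + (1 - p) / (n + 2) with hθseqdef
  have hθmem : ∀ n : ℕ, p < θseq n ∧ θseq n < 1 := by
    intro n
    have h2 : (0:ℝ) < (n:ℝ) + 2 := by positivity
    constructor
    · have : 0 < (1 - p) / ((n:ℝ) + 2) := div_pos (by linarith) h2
      simp only [hθseqdef]; linarith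
    · have : (1 - p) / ((n:ℝ) + 2) < 1 - p := by
        rw [div_lt_iff₀ h2]
        nlinarith
      simp only [hθseqdef]; linarith
  have hθtend : Tendsto θseq atTop (𝓝 p) := by
    have h1 : Tendsto (fun n : ℕ => ((n:ℝ) + 2)) atTop atTop :=
      tendsto_atTop_add_const_right _ 2 tendsto_natCast_atTop_atTop
    have h2 : Tendsto (fun n : ℕ => (1 - p) / ((n:ℝ) + 2)) atTop (𝓝 0) := by
      simpa [div_eq_mul_inv] using (h1.inv_tendsto_atTop).const_mul (1 - p)
    simpa using (tendsto_const_nhds (x := p)).add h2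
  have hlogtend : Tendsto (fun n : ℕ => ((x * Real.log (θseq n) : ℝ) : EReal)) atTop
      (𝓝 ((x * Real.log p : ℝ) : EReal)) := by
    apply EReal.tendsto_coe.2
    exact (((Real.continuousAt_log (ne_of_gt hp0)).tendsto.comp hθtend).const_mul x)
  exact ge_of_tendsto' hlogtend fun n => key (θseq n) (hθmem n).1 (hθmem n).2
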